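/- Let X be a finite alphabet, ↢ ∉ X a new letter ('eraser'), and for infinite words over X ∪ {↢} define the evaluations x^↢ (where an eraser with nothing to erase is ignored) and x^↩ (where such an eraser makes the result undefined). For any L ⊆ X^ω, the sets L∼ = {x ∈ (X∪{↢})^ω : x^↢ ∈ L} and L≈ = {x ∈ (X∪{↢})^ω : x^↩ is defined and ∈ L} are Wadge equivalent: L∼ ≤_W L≈ and L≈ ≤_W L∼. -/

import Mathlib

open Set

/-- Finite levels of the Borel hierarchy: index `n` corresponds to level `n+1`.
Index 0 gives (open, closed); index `n+1` gives (countable unions of level-`n` Π sets,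
countable intersections of level-`n` Σ sets). -/
def sigmaPiAux (α : Type*) [TopologicalSpace α] : ℕ → (Set α → Prop) × (Set α → Prop)
  | 0 => (fun s => IsOpen s, fun s => IsClosed s)
  | n + 1 =>
      (fun s => ∃ f : ℕ → Set α, (∀ i, (sigmaPiAux α n).2 (f i)) ∧ s = ⋃ i, f i,
       fun s => ∃ f : ℕ → Set α, (∀ i, (sigmaPiAux α n).1 (f i)) ∧ s = ⋂ i, f i)

/-- The class Σ⁰ₖ of the Borel hierarchy (for `k ≥ 1`). -/
def SigmaClass {α : Type*} [TopologicalSpace α] (k : ℕ) (s : Set α) : Prop :=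
  (sigmaPiAux α (k - 1)).1 s

/-- The class Π⁰ₖ of the Borel hierarchy (for `k ≥ 1`). -/
def PiClass {α : Type*} [TopologicalSpace α] (k : ℕ) (s : Set α) : Prop :=
  (sigmaPiAux α (k - 1)).2 s

/-- A finite word `l` is a prefix of the infinite word `x`. -/
def PrefixOf {α : Type*} (l : List α) (x : ℕ → α) : Prop :=
  ∀ (i : ℕ) (h : i < l.length), l.get ⟨i, h⟩ = x i

/-- The ω-power of a dictionary `V`: infinite concatenations of nonempty words of `V`. -/
def omegaPow {α : Type*} (V : Set (List α)) : Set (ℕ → α) :=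
  {x | ∃ u : ℕ → List α, (∀ i, u i ∈ V ∧ u i ≠ []) ∧
        ∀ n, PrefixOf (((List.range n).map u).flatten) x}

/-- Words over `X ∪ {b}` (with `b = none`) containing infinitely many letters of `X`. -/
def Zinf (X : Type*) : Set (ℕ → Option X) := {x | ∀ N, ∃ m, N ≤ m ∧ (x m).isSome}

/-- The map deleting every occurrence of the letter `b = none`. -/
noncomputable def phi {X : Type*} [Inhabited X] (x : ℕ → Option X) : ℕ → X :=
  fun n => (x (Nat.nth (fun m => (x m).isSome = true) n)).getD default

/-- `A^b = {x ∈ (X ∪ {b})^ω : x(/b) ∈ A}`. -/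
def bPower {X : Type*} [Inhabited X] (A : Set (ℕ → X)) : Set (ℕ → Option X) :=
  {x | x ∈ Zinf X ∧ phi x ∈ A}

/-- Wadge reducibility. -/
def WadgeLE {α β : Type*} [TopologicalSpace α] [TopologicalSpace β]
    (L : Set α) (L' : Set β) : Prop :=
  ∃ f : α → β, Continuous f ∧ L = f ⁻¹' L'

/-- Substitution extended to finite words. -/
def subWord {X Y : Type*} (f : X → Set (List Y)) : List X → Set (List Y)
  | [] => {[]}
  | a :: w => {l | ∃ u v, u ∈ f a ∧ v ∈ subWord f w ∧ l = u ++ v}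

/-- Substitution extended to dictionaries. -/
def subLang {X Y : Type*} (f : X → Set (List Y)) (V : Set (List X)) : Set (List Y) :=
  ⋃ w ∈ V, subWord f w

/-- Substitution extended to an infinite word. -/
def subOmega {X Y : Type*} (f : X → Set (List Y)) (x : ℕ → X) : Set (ℕ → Y) :=
  {y | ∃ u : ℕ → List Y, (∀ i, u i ∈ f (x i)) ∧
        ∀ n, PrefixOf (((List.range n).map u).flatten) y}

/-- Substitution extended to ω-languages. -/
def subOmegaImage {X Y : Type*} (f : X → Set (List Y)) (L : Set (ℕ → X)) : Set (ℕ → Y) :=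
  ⋃ x ∈ L, subOmega f x



/-- Left-to-right evaluation of erasers (`none` = ↢), where an eraser with nothing to
erase is simply ignored. -/
def evalT {X : Type*} (w : List (Option X)) : List X :=
  w.foldl (fun s c => match c with | some a => s ++ [a] | none => s.dropLast) []

/-- Left-to-right evaluation of erasers, undefined (`none` result) as soon as an eraser
has nothing to erase. -/
def evalH {X : Type*} (w : List (Option X)) : Option (List X) :=
  w.foldl (fun s? c => s?.bind fun s =>
      match c with
      | some a => some (s ++ [a])
      | none => match s with | [] => none | _ :: _ => some s.dropLast)
    (some [])

/-- The prefix of length `k` of the infinite word `x`. -/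
def prefTake {X : Type*} (x : ℕ → X) (k : ℕ) : List X := (List.range k).map x

/-- `L∼ = {x : x^↢ ∈ L}`: the evaluations of the finite prefixes of `x` converge
(in Duparc's sense of eventually stable prefixes) to an infinite word lying in `L`. -/
def Ltilde {X : Type*} (L : Set (ℕ → X)) : Set (ℕ → Option X) :=
  {x | ∃ y ∈ L, ∀ k, ∃ n, ∀ p, n ≤ p → (evalT (prefTake x p)).take k = prefTake y k}

/-- `L≈ = {x : x^↩ is defined and belongs to L}`: every finite prefix of `x` evaluates
without error and the evaluations converge to an infinite word lying in `L`. -/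
def Lapprox {X : Type*} (L : Set (ℕ → X)) : Set (ℕ → Option X) :=
  {x | (∀ n, (evalH (prefTake x n)).isSome) ∧
       ∃ y ∈ L, ∀ k, ∃ n, ∀ p, n ≤ p →
          ((evalH (prefTake x p)).getD []).take k = prefTake y k}
/-! ### Auxiliary development -/

section Aux

variable {X : Type}

/-- The one-step transition of `evalH`. -/
def Hstep {X : Type} : Option (List X) → Option X → Option (List X) :=
  fun s? c => s?.bind fun s =>
    match c with
    | some a => some (s ++ [a])
    | none => match s with | [] => none | _ :: _ => some s.dropLast

lemma evalH_eq_foldl (w : List (Option X)) : evalH w = w.foldl Hstep (some []) := rfl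

lemma evalT_append_some (w : List (Option X)) (c : X) :
    evalT (w ++ [some c]) = evalT w ++ [c] := by
  simp [evalT, List.foldl_append]

lemma evalT_append_none (w : List (Option X)) :
    evalT (w ++ [(none : Option X)]) = (evalT w).dropLast := by
  simp [evalT, List.foldl_append]

lemma evalH_append (w : List (Option X)) (c : Option X) :
    evalH (w ++ [c]) = Hstep (evalH w) c := by
  simp [evalH_eq_foldl, List.foldl_append]

lemma evalH_nil : evalH ([] : List (Option X)) = some [] := rfl

lemma evalH_eq_some {w : List (Option X)} {s : List X} (h : evalH w = some s) :
    s = evalT w := by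
  induction w using List.reverseRecOn generalizing s with
  | nil => rw [evalH_nil] at h; cases h; rfl
  | append_singleton w c ih =>
    rw [evalH_append] at h
    cases hw : evalH w with
    | none => rw [hw] at h; simp [Hstep] at h
    | some t =>
      rw [hw] at h
      have ht := ih hw
      cases c with
      | some a =>
        simp [Hstep] at h
        rw [evalT_append_some, ← ht, ← h]
      | none =>
        rw [evalT_append_none, ← ht]
        cases t with
        | nil => simp [Hstep] at h
        | cons b bs => simp [Hstep] at h; rw [← h]

lemma evalH_none_append (w v : List (Option X)) (h : evalH w = none) :
    evalH (w ++ v) = none := by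
  induction v using List.reverseRecOn with
  | nil => simpa using h
  | append_singleton v c ih =>
    rw [← List.append_assoc, evalH_append, ih]
    rfl

lemma prefTake_zero (x : ℕ → X) : prefTake x 0 = [] := rfl

lemma prefTake_succ (x : ℕ → X) (n : ℕ) :
    prefTake x (n + 1) = prefTake x n ++ [x n] := by
  simp [prefTake, List.range_succ]

lemma prefTake_length (x : ℕ → X) (n : ℕ) : (prefTake x n).length = n := by
  simp [prefTake]

lemma prefTake_getElem (x : ℕ → X) (n i : ℕ) (h : i < (prefTake x n).length) :
    (prefTake x n)[i] = x i := by
  simp [prefTake]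

lemma prefTake_congr {x z : ℕ → X} {n : ℕ} (h : ∀ i < n, x i = z i) :
    prefTake x n = prefTake z n := by
  unfold prefTake
  exact List.map_congr_left fun i hi => h i (List.mem_range.mp hi)

lemma prefTake_one_ne_nil (y : ℕ → X) : prefTake y 1 ≠ [] := by
  simp [prefTake]

/-- Continuity of letter-by-letter maps depending only on the past. -/
lemma continuous_of_local [TopologicalSpace (Option X)] [DiscreteTopology (Option X)]
    (f : (ℕ → Option X) → ℕ → Option X)
    (h : ∀ (n : ℕ) (x z : ℕ → Option X), (∀ i ≤ n, x i = z i) → f x n = f z n) :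
    Continuous f := by
  apply continuous_pi
  intro n
  have key : (fun x => f x n) =
      (fun σ : Fin (n + 1) → Option X =>
        f (fun i => if hi : i < n + 1 then σ ⟨i, hi⟩ else none) n)
        ∘ (fun x (i : Fin (n + 1)) => x i.val) := by
    funext x
    exact h n x _ (fun i hi => by simp [Nat.lt_succ_of_le hi])
  rw [key]
  exact continuous_of_discreteTopology.comp (continuous_pi fun i => continuous_apply _)

/-! #### The reduction `L≈ ≤ L∼` -/

/-- Copy the word, but output only erasers after the first evaluation error. -/
def eraseF {X : Type} (x : ℕ → Option X) (n : ℕ) : Option X :=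
  if (evalH (prefTake x (n + 1))).isSome then x n else none

lemma evalH_none_mono {x : ℕ → Option X} {e m : ℕ} (h : evalH (prefTake x e) = none)
    (hm : e ≤ m) : evalH (prefTake x m) = none := by
  induction hm with
  | refl => exact h
  | step _ ih =>
    rename_i m' _
    rw [prefTake_succ, evalH_append, ih]
    rfl

lemma wadge_Lapprox_le_Ltilde [TopologicalSpace (Option X)] [DiscreteTopology (Option X)]
    (L : Set (ℕ → X)) : WadgeLE (Lapprox L) (Ltilde L) := by
  classical
  refine ⟨eraseF, ?_, ?_⟩
  · apply continuous_of_local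
    intro n x z hxz
    have hpt : prefTake x (n + 1) = prefTake z (n + 1) :=
      prefTake_congr fun i hi => hxz i (Nat.lt_succ_iff.mp hi)
    unfold eraseF
    rw [hpt, hxz n le_rfl]
  · ext x
    simp only [Set.mem_preimage]
    constructor
    · rintro ⟨hdef, y, hy, hconv⟩
      have hfx : eraseF x = x := by
        funext n
        exact if_pos (hdef (n + 1))
      rw [hfx]
      refine ⟨y, hy, fun k => ?_⟩
      obtain ⟨n, hn⟩ := hconv k
      refine ⟨n, fun p hp => ?_⟩
      obtain ⟨s, hs⟩ := Option.isSome_iff_exists.mp (hdef p)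
      have := hn p hp
      rw [hs] at this
      rw [← evalH_eq_some hs]
      simpa using this
    · intro hx
      by_cases hall : ∀ n, (evalH (prefTake x n)).isSome
      · have hfx : eraseF x = x := by
          funext n
          exact if_pos (hall (n + 1))
        rw [hfx] at hx
        obtain ⟨y, hy, hconv⟩ := hx
        refine ⟨hall, y, hy, fun k => ?_⟩
        obtain ⟨n, hn⟩ := hconv k
        refine ⟨n, fun p hp => ?_⟩
        obtain ⟨s, hs⟩ := Option.isSome_iff_exists.mp (hall p)
        have := hn p hp
        rw [hs, Option.getD_some, evalH_eq_some hs]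
        exact this
      · exfalso
        push_neg at hall
        obtain ⟨m, hm⟩ := hall
        have hex : ∃ n, ¬(evalH (prefTake x n)).isSome := ⟨m, hm⟩
        have he : ¬(evalH (prefTake x (Nat.find hex))).isSome := Nat.find_spec hex
        have hlt : ∀ j < Nat.find hex, (evalH (prefTake x j)).isSome := fun j hj => by
          by_contra hc; exact absurd (Nat.find_le hc) (not_le.mpr hj)
        have he1 : Nat.find hex ≠ 0 := by
          intro h0
          rw [h0] at he
          exact he (by rw [prefTake_zero, evalH_nil]; rfl)
        obtain ⟨e', heq⟩ : ∃ e', Nat.find hex = e' + 1 :=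
          ⟨Nat.find hex - 1, (Nat.succ_pred_eq_of_ne_zero he1).symm⟩
        rw [heq] at he hlt
        obtain ⟨s, hs⟩ := Option.isSome_iff_exists.mp (hlt e' (Nat.lt_succ_self e'))
        have hnone : evalH (prefTake x (e' + 1)) = none := Option.not_isSome_iff_eq_none.mp he
        have hstep : Hstep (some s) (x e') = none := by
          rw [← hs, ← evalH_append, ← prefTake_succ]
          exact hnone
        have hsnil : s = [] ∧ x e' = none := by
          cases hxe : x e' with
          | some c => rw [hxe] at hstep; simp [Hstep] at hstep
          | none =>
            cases hs' : s with
            | nil => exact ⟨rfl, rfl⟩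
            | cons b bs => rw [hxe, hs'] at hstep; simp [Hstep] at hstep
        have hTnil : evalT (prefTake x e') = [] := by
          rw [← evalH_eq_some hs, hsnil.1]
        -- the image has only erasers from position e' on
        have himg : ∀ p, e' ≤ p → evalT (prefTake (eraseF x) p) = [] := by
          intro p hp
          induction p, hp using Nat.le_induction with
          | base =>
            have : prefTake (eraseF x) e' = prefTake x e' := by
              apply prefTake_congr
              intro i hi
              exact if_pos (hlt (i + 1) (Nat.succ_lt_succ hi))
            rw [this, hTnil]
          | succ q hq ih =>
            have hq' : eraseF x q = none := by
              unfold eraseF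
              rw [evalH_none_mono hnone (Nat.succ_le_succ hq)]
              simp
            rw [prefTake_succ, hq', evalT_append_none, ih]
            rfl
        obtain ⟨y, _, hconv⟩ := hx
        obtain ⟨n, hn⟩ := hconv 1
        have h1 := hn (max n e') (le_max_left _ _)
        rw [himg _ (le_max_right _ _)] at h1
        simp only [List.take_nil] at h1
        exact prefTake_one_ne_nil y h1.symm

/-! #### The reduction `L∼ ≤ L≈` -/

/-- The block of output letters for reading one input letter: a letter of `X` is copied,
an eraser is copied if the current stack is nonempty, and an ignored eraser is replaced
by the harmless pair `a↢`. -/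
def blk (a : X) (x : ℕ → Option X) (i : ℕ) : List (Option X) :=
  match x i with
  | some c => [some c]
  | none =>
    match evalT (prefTake x i) with
    | [] => [some a, none]
    | _ :: _ => [none]

/-- Concatenation of the first `n` blocks. -/
def Bp (a : X) (x : ℕ → Option X) (n : ℕ) : List (Option X) :=
  ((List.range n).map (blk a x)).flatten

/-- The reduction map for `L∼ ≤ L≈`. -/
def padF (a : X) (x : ℕ → Option X) (n : ℕ) : Option X := (Bp a x (n + 1)).getD n none

lemma blk_len_pos (a : X) (x : ℕ → Option X) (i : ℕ) : 0 < (blk a x i).length := by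
  unfold blk
  rcases x i with _ | c
  · rcases evalT (prefTake x i) with _ | ⟨b, bs⟩ <;> simp
  · simp

lemma Bp_zero (a : X) (x : ℕ → Option X) : Bp a x 0 = [] := rfl

lemma Bp_succ (a : X) (x : ℕ → Option X) (n : ℕ) :
    Bp a x (n + 1) = Bp a x n ++ blk a x n := by
  simp [Bp, List.range_succ]

lemma Bp_prefix (a : X) (x : ℕ → Option X) {n k : ℕ} (h : n ≤ k) :
    Bp a x n <+: Bp a x k := by
  induction h with
  | refl => exact List.prefix_refl _
  | step _ ih =>
    rename_i k' _
    rw [Bp_succ]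
    exact ih.trans (List.prefix_append _ _)

lemma Bp_len_mono (a : X) (x : ℕ → Option X) {n k : ℕ} (h : n ≤ k) :
    (Bp a x n).length ≤ (Bp a x k).length :=
  (Bp_prefix a x h).length_le

lemma Bp_len_lb (a : X) (x : ℕ → Option X) (n : ℕ) : n ≤ (Bp a x n).length := by
  induction n with
  | zero => simp
  | succ n ih =>
    rw [Bp_succ, List.length_append]
    exact Nat.add_le_add ih (blk_len_pos a x n)

lemma padF_eq (a : X) (x : ℕ → Option X) {n i : ℕ} (hi : i < (Bp a x n).length) :
    padF a x i = (Bp a x n)[i] := by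
  unfold padF
  have hi' : i < (Bp a x (i + 1)).length := lt_of_lt_of_le (Nat.lt_succ_self i) (Bp_len_lb a x _)
  rw [List.getD_eq_getElem _ _ hi']
  rcases le_total (i + 1) n with hle | hle
  · exact (Bp_prefix a x hle).getElem hi'
  · exact ((Bp_prefix a x hle).getElem hi).symm

lemma prefTake_padF (a : X) (x : ℕ → Option X) {p n : ℕ} (h : p ≤ (Bp a x n).length) :
    prefTake (padF a x) p = (Bp a x n).take p := by
  apply List.ext_getElem
  · rw [prefTake_length, List.length_take]
    omega
  · intro i h1 h2
    rw [prefTake_getElem, List.getElem_take]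
    exact padF_eq a x (by rw [prefTake_length] at h1; omega)

lemma evalH_Bp (a : X) (x : ℕ → Option X) (n : ℕ) :
    evalH (Bp a x n) = some (evalT (prefTake x n)) := by
  induction n with
  | zero => rfl
  | succ n ih =>
    rw [Bp_succ, prefTake_succ]
    cases hx : x n with
    | some c =>
      have hb : blk a x n = [some c] := by unfold blk; rw [hx]
      rw [hb, evalH_append, ih, evalT_append_some]
      rfl
    | none =>
      cases hT : evalT (prefTake x n) with
      | nil =>
        have hb : blk a x n = [some a, none] := by unfold blk; rw [hx, hT]
        rw [hb, show [some a, (none : Option X)] = [some a] ++ [none] from rfl,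
          ← List.append_assoc, evalH_append, evalH_append, ih, hT, evalT_append_none, hT]
        rfl
      | cons b bs =>
        have hb : blk a x n = [none] := by unfold blk; rw [hx, hT]
        rw [hb, evalH_append, ih, hT, evalT_append_none, hT]
        rfl

lemma exists_block (a : X) (x : ℕ → Option X) (p : ℕ) :
    ∃ n, (Bp a x n).length ≤ p ∧ p < (Bp a x (n + 1)).length := by
  classical
  have hex : ∃ m, p < (Bp a x (m + 1)).length :=
    ⟨p, lt_of_lt_of_le (Nat.lt_succ_self p) (Bp_len_lb a x (p + 1))⟩
  refine ⟨Nat.find hex, ?_, Nat.find_spec hex⟩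
  cases hfind : Nat.find hex with
  | zero => rw [Bp_zero]; exact Nat.zero_le p
  | succ m =>
    have := Nat.find_min hex (by omega : m < Nat.find hex)
    rw [hfind] at *
    omega

/-- Master lemma: every prefix of `padF a x` evaluates without error, either to the
evaluation of an input prefix, or (mid-padding) to `[a]` when the stack is empty. -/
lemma evalH_padF_pref (a : X) (x : ℕ → Option X) (p : ℕ) :
    ∃ n, (Bp a x n).length ≤ p ∧ p < (Bp a x (n + 1)).length ∧
      (evalH (prefTake (padF a x) p) = some (evalT (prefTake x n)) ∨
        (evalH (prefTake (padF a x) p) = some [a] ∧ evalT (prefTake x n) = [])) := by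
  obtain ⟨n, h1, h2⟩ := exists_block a x p
  refine ⟨n, h1, h2, ?_⟩
  rcases eq_or_lt_of_le h1 with heq | hlt
  · left
    rw [prefTake_padF a x (le_of_eq heq.symm), ← heq, List.take_length, evalH_Bp]
  · -- mid-block: must be the padding case
    rw [Bp_succ, List.length_append] at h2
    cases hx : x n with
    | some c =>
      have hb : blk a x n = [some c] := by unfold blk; rw [hx]
      rw [hb] at h2; simp at h2; omega
    | none =>
      cases hT : evalT (prefTake x n) with
      | cons b bs =>
        have hb : blk a x n = [none] := by unfold blk; rw [hx, hT]
        rw [hb] at h2; simp at h2; omega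
      | nil =>
        right
        refine ⟨?_, rfl⟩
        have hb : blk a x n = [some a, none] := by unfold blk; rw [hx, hT]
        have hp : p = (Bp a x n).length + 1 := by rw [hb] at h2; simp at h2; omega
        have hpref : prefTake (padF a x) p = Bp a x n ++ [some a] := by
          rw [prefTake_padF a x (n := n + 1) (by rw [Bp_succ, List.length_append, hb]; simp; omega),
            Bp_succ, hb, hp, List.take_append]
          simp
        rw [hpref, evalH_append, evalH_Bp, hT]
        rfl

lemma blk_congr (a : X) {x z : ℕ → Option X} {i : ℕ} (h : ∀ j ≤ i, x j = z j) :
    blk a x i = blk a z i := by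
  unfold blk
  rw [h i le_rfl, prefTake_congr (fun j hj => h j (le_of_lt hj))]

lemma padF_congr (a : X) {x z : ℕ → Option X} {n : ℕ} (h : ∀ i ≤ n, x i = z i) :
    padF a x n = padF a z n := by
  unfold padF Bp
  rw [List.map_congr_left fun i hi =>
    blk_congr a fun j hj => h j (le_trans hj (Nat.lt_succ_iff.mp (List.mem_range.mp hi)))]

lemma wadge_Ltilde_le_Lapprox [TopologicalSpace (Option X)] [DiscreteTopology (Option X)]
    (a : X) (L : Set (ℕ → X)) : WadgeLE (Ltilde L) (Lapprox L) := by
  refine ⟨padF a, ?_, ?_⟩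
  · exact continuous_of_local _ (fun n x z h => padF_congr a h)
  · ext x
    simp only [Set.mem_preimage]
    constructor
    · rintro ⟨y, hy, hconv⟩
      refine ⟨fun p => ?_, y, hy, fun k => ?_⟩
      · obtain ⟨n, _, _, h | ⟨h, _⟩⟩ := evalH_padF_pref a x p <;> rw [h] <;> rfl
      · cases k with
        | zero => exact ⟨0, fun p _ => by simp [prefTake]⟩
        | succ k' =>
          obtain ⟨n₀, hn₀⟩ := hconv (k' + 1)
          refine ⟨(Bp a x n₀).length, fun p hp => ?_⟩
          obtain ⟨m, hm1, hm2, hm3⟩ := evalH_padF_pref a x p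
          have hmn : n₀ ≤ m := by
            by_contra hc
            push_neg at hc
            exact absurd (le_trans (Bp_len_mono a x hc) hp) (not_le.mpr hm2)
          have hx := hn₀ m hmn
          have hne : evalT (prefTake x m) ≠ [] := by
            intro hnil
            rw [hnil] at hx
            have := congrArg List.length hx
            rw [prefTake_length] at this
            simp at this
          rcases hm3 with h | ⟨_, h⟩
          · rw [h, Option.getD_some]; exact hx
          · exact absurd h hne
    · rintro ⟨_, y, hy, hconv⟩
      refine ⟨y, hy, fun k => ?_⟩
      obtain ⟨n₀, hc⟩ := hconv k
      refine ⟨n₀, fun q hq => ?_⟩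
      have hL : n₀ ≤ (Bp a x q).length := le_trans hq (Bp_len_lb a x q)
      have := hc ((Bp a x q).length) hL
      rwa [prefTake_padF a x (le_refl (Bp a x q).length), List.take_length, evalH_Bp,
        Option.getD_some] at this

end Aux

/-- for every `L ⊆ X^ω`, the ω-languages `L∼` and `L≈` are Wadge equivalent. -/
theorem Ltilde_wadgeEquiv_Lapprox {X : Type} [Fintype X]
    [TopologicalSpace (Option X)] [DiscreteTopology (Option X)] (L : Set (ℕ → X)) :
    WadgeLE (Ltilde L) (Lapprox L) ∧ WadgeLE (Lapprox L) (Ltilde L) := by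
  refine ⟨?_, wadge_Lapprox_le_Ltilde L⟩
  rcases isEmpty_or_nonempty X with hX | ⟨⟨a⟩⟩
  · -- degenerate case: both languages are empty
    refine ⟨id, continuous_id, ?_⟩
    have h1 : Ltilde L = ∅ := by
      ext x
      simp only [Ltilde, Set.mem_setOf_eq, Set.mem_empty_iff_false, iff_false]
      rintro ⟨y, -, -⟩
      exact (hX.false (y 0)).elim
    have h2 : Lapprox L = ∅ := by
      ext x
      simp only [Lapprox, Set.mem_setOf_eq, Set.mem_empty_iff_false, iff_false]
      rintro ⟨-, y, -, -⟩
      exact (hX.false (y 0)).elim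
    rw [h1, h2]
    rfl
  · exact wadge_Ltilde_le_Lapprox a L
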